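/- For probability vectors p, q on a finite index set arising as measurement statistics of pure states ψ, φ (pᵢ = |⟨eᵢ,ψ⟩|², qᵢ = |⟨eᵢ,φ⟩|² for an orthonormal basis {eᵢ}), the total variation distance satisfies ∑ᵢ |pᵢ − qᵢ| ≤ 2·√(1 − |⟨ψ,φ⟩|²). -/

import Mathlib

open scoped InnerProductSpace

lemma parseval_sq {E : Type*} [NormedAddCommGroup E]
    [InnerProductSpace ℂ E] [FiniteDimensional ℂ E] {ι : Type*} [Fintype ι]
    (b : OrthonormalBasis ι ℂ E) (x : E) :
    ∑ i, ‖⟪b i, x⟫_ℂ‖ ^ 2 = ‖x‖ ^ 2 := by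
  have h := b.repr.norm_map x
  rw [EuclideanSpace.norm_eq] at h
  have h2 : (∑ i, ‖b.repr x i‖ ^ 2) = ‖x‖ ^ 2 := by
    rw [← h, Real.sq_sqrt (by positivity)]
  simpa [b.repr_apply_apply, real_inner_comm] using h2

theorem measurement_tv_bound {E : Type*} [NormedAddCommGroup E]
    [InnerProductSpace ℂ E] [FiniteDimensional ℂ E] {ι : Type*} [Fintype ι]
    (b : OrthonormalBasis ι ℂ E) (ψ φ : E) (hψ : ‖ψ‖ = 1) (hφ : ‖φ‖ = 1)
    (p q : ι → ℝ)
    (hp : ∀ i, p i = ‖⟪b i, ψ⟫_ℂ‖ ^ 2)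
    (hq : ∀ i, q i = ‖⟪b i, φ⟫_ℂ‖ ^ 2) :
    ∑ i, |p i - q i| ≤ 2 * Real.sqrt (1 - ‖⟪ψ, φ⟫_ℂ‖ ^ 2) := by
  set c : ℂ := ⟪ψ, φ⟫_ℂ with hc
  set t : ℝ := ‖c‖ with ht
  have ht0 : 0 ≤ t := norm_nonneg c
  have ht1 : t ≤ 1 := by
    have := norm_inner_le_norm (𝕜 := ℂ) ψ φ
    simpa [hψ, hφ, ← hc, ← ht] using this
  set u : ℂ := if c = 0 then 1 else c / (t : ℂ) with hu
  have hu1 : ‖u‖ = 1 := by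
    by_cases h : c = 0
    · simp [hu, h]
    · have : (t : ℝ) ≠ 0 := by simpa [ht] using (norm_ne_zero_iff.mpr h)
      rw [hu, if_neg h, norm_div, Complex.norm_of_nonneg ht0, ← ht]
      exact div_self this
  set ψ' : E := u • ψ with hψ'
  have hinner : ⟪ψ', φ⟫_ℂ = (t : ℂ) := by
    rw [hψ', inner_smul_left, ← hc]
    by_cases h : c = 0
    · simp [h, ht, hu]
    · have ht' : t ≠ 0 := by simp [ht, h]
      have htne : (t : ℂ) ≠ 0 := Complex.ofReal_ne_zero.mpr ht'
      rw [hu]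
      simp only [h, if_false]
      rw [map_div₀, Complex.conj_ofReal]
      field_simp
      rw [mul_comm ((starRingEnd ℂ) c) c, Complex.mul_conj]
      norm_cast
      rw [Complex.normSq_eq_norm_sq, ← ht]
  have hψ'norm : ‖ψ'‖ = 1 := by
    rw [hψ', norm_smul]; simp [hψ, hu1]
  have hp' : ∀ i, p i = ‖⟪b i, ψ'⟫_ℂ‖ ^ 2 := by
    intro i
    rw [hp, hψ', inner_smul_right, norm_mul, hu1, one_mul]
  have step1 : ∀ i, |p i - q i| ≤
      ‖⟪b i, ψ' + φ⟫_ℂ‖ * ‖⟪b i, ψ' - φ⟫_ℂ‖ := by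
    intro i
    set a := ⟪b i, ψ'⟫_ℂ with ha
    set d := ⟪b i, φ⟫_ℂ with hd
    have h1 : p i - q i = ((a + d) * (starRingEnd ℂ) (a - d)).re := by
      rw [hp' i, hq i, ← ha, ← hd]
      simp only [Complex.sq_norm, Complex.normSq_apply, Complex.mul_re,
        Complex.sub_re, Complex.add_re, Complex.sub_im, Complex.add_im,
        Complex.conj_re, Complex.conj_im]
      ring
    rw [h1, inner_add_right, inner_sub_right, ← ha, ← hd]
    calc |((a + d) * (starRingEnd ℂ) (a - d)).re|
        ≤ ‖(a + d) * (starRingEnd ℂ) (a - d)‖ := Complex.abs_re_le_norm _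
      _ = ‖a + d‖ * ‖a - d‖ := by
          rw [norm_mul, Complex.norm_conj]
  have hsum : ∑ i, |p i - q i| ≤
      Real.sqrt (∑ i, ‖⟪b i, ψ' + φ⟫_ℂ‖ ^ 2) *
      Real.sqrt (∑ i, ‖⟪b i, ψ' - φ⟫_ℂ‖ ^ 2) := by
    refine le_trans (Finset.sum_le_sum fun i _ => step1 i) ?_
    exact Real.sum_mul_le_sqrt_mul_sqrt _ _ _
  rw [parseval_sq, parseval_sq] at hsum
  have hadd : ‖ψ' + φ‖ ^ 2 = 2 + 2 * t := by
    rw [norm_add_sq (𝕜 := ℂ), hinner, hψ'norm, hφ]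
    simp; ring
  have hsub : ‖ψ' - φ‖ ^ 2 = 2 - 2 * t := by
    rw [norm_sub_sq (𝕜 := ℂ), hinner, hψ'norm, hφ]
    simp; ring
  rw [hadd, hsub] at hsum
  refine hsum.trans_eq ?_
  rw [← Real.sqrt_mul (by linarith),
    show (2 + 2 * t) * (2 - 2 * t) = 4 * (1 - t ^ 2) by ring,
    Real.sqrt_mul (by norm_num),
    show Real.sqrt 4 = 2 by
      rw [show (4 : ℝ) = 2 ^ 2 by norm_num]; exact Real.sqrt_sq (by norm_num)]
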